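/- Let d be a positive integer and let r ∈ (0, 1/(d+1)). Then ((1 − (d+1)r)/(1 − dr))^{d+1} + 1/(1 − r)^{d+1} ≥ 2. -/

import Mathlib

theorem poa_bin4 (m : ℕ) (v : ℝ) (hv : 0 ≤ v) :
    1 + (m:ℝ)*v + (m:ℝ)*((m:ℝ)-1)/2*v^2 + (m:ℝ)*((m:ℝ)-1)*((m:ℝ)-2)/6*v^3
      + (m:ℝ)*((m:ℝ)-1)*((m:ℝ)-2)*((m:ℝ)-3)/24*v^4 ≤ (1+v)^m := by
  induction m with
  | zero => norm_num
  | succ n ih =>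
    have h1 : (0:ℝ) ≤ 1 + v := by linarith
    have h3 : (1 + (n:ℝ)*v + (n:ℝ)*((n:ℝ)-1)/2*v^2 + (n:ℝ)*((n:ℝ)-1)*((n:ℝ)-2)/6*v^3
      + (n:ℝ)*((n:ℝ)-1)*((n:ℝ)-2)*((n:ℝ)-3)/24*v^4) * (1+v) ≤ (1+v)^n * (1+v) :=
      mul_le_mul_of_nonneg_right ih h1
    have h4 : (0:ℝ) ≤ (n:ℝ)*((n:ℝ)-1)*((n:ℝ)-2)*((n:ℝ)-3)/24*v^5 := by
      rcases Nat.lt_or_ge n 4 with h | h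
      · interval_cases n <;> norm_num
      · have hn : (4:ℝ) ≤ (n:ℝ) := by exact_mod_cast h
        have hc : (0:ℝ) ≤ (n:ℝ)*((n:ℝ)-1)*((n:ℝ)-2)*((n:ℝ)-3)/24 := by nlinarith [sq_nonneg ((n:ℝ)*((n:ℝ)-3)), sq_nonneg (((n:ℝ)-1)*((n:ℝ)-2))]
        exact mul_nonneg hc (by positivity)
    have h5 : (1+v)^(n+1) = (1+v)^n * (1+v) := by ring
    push_cast
    nlinarith [h3, h4]

theorem poa_bon7 (m : ℕ) (u : ℝ) (h0 : 0 ≤ u) (h1 : u ≤ 1) :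
    1 - (m:ℝ)*u + (m:ℝ)*((m:ℝ)-1)/2*u^2 - (m:ℝ)*((m:ℝ)-1)*((m:ℝ)-2)/6*u^3
      + (m:ℝ)*((m:ℝ)-1)*((m:ℝ)-2)*((m:ℝ)-3)/24*u^4
      - (m:ℝ)*((m:ℝ)-1)*((m:ℝ)-2)*((m:ℝ)-3)*((m:ℝ)-4)/120*u^5
      + (m:ℝ)*((m:ℝ)-1)*((m:ℝ)-2)*((m:ℝ)-3)*((m:ℝ)-4)*((m:ℝ)-5)/720*u^6
      - (m:ℝ)*((m:ℝ)-1)*((m:ℝ)-2)*((m:ℝ)-3)*((m:ℝ)-4)*((m:ℝ)-5)*((m:ℝ)-6)/5040*u^7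
      ≤ (1-u)^m := by
  induction m with
  | zero => norm_num
  | succ n ih =>
    have h2 : (0:ℝ) ≤ 1 - u := by linarith
    have h3 := mul_le_mul_of_nonneg_right ih h2
    have h4 : (0:ℝ) ≤ (n:ℝ)*((n:ℝ)-1)*((n:ℝ)-2)*((n:ℝ)-3)*((n:ℝ)-4)*((n:ℝ)-5)*((n:ℝ)-6)/5040*u^8 := by
      rcases Nat.lt_or_ge n 7 with h | h
      · interval_cases n <;> norm_num
      · have hn : (7:ℝ) ≤ (n:ℝ) := by exact_mod_cast h
        have hc : (0:ℝ) ≤ (n:ℝ)*((n:ℝ)-1)*((n:ℝ)-2)*((n:ℝ)-3)*((n:ℝ)-4)*((n:ℝ)-5)*((n:ℝ)-6)/5040 := by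
          have b0 : (0:ℝ) < (n:ℝ) := by linarith
          have b1 : (0:ℝ) < (n:ℝ)-1 := by linarith
          have b2 : (0:ℝ) < (n:ℝ)-2 := by linarith
          have b3 : (0:ℝ) < (n:ℝ)-3 := by linarith
          have b4 : (0:ℝ) < (n:ℝ)-4 := by linarith
          have b5 : (0:ℝ) < (n:ℝ)-5 := by linarith
          have b6 : (0:ℝ) < (n:ℝ)-6 := by linarith
          positivity
        exact mul_nonneg hc (by positivity)
    have h5 : (1-u)^(n+1) = (1-u)^n * (1-u) := by ring
    push_cast
    nlinarith [h3, h4]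

set_option maxHeartbeats 2000000 in
theorem poa_core (x u : ℝ) (hu : 0 < u) (h7 : 7*u ≤ x) (hx : x ≤ 113/50) :
    x*(x-2*u)*(1+x-2*u)/6 + (x-4*u)*(1+x-2*u)^4/120
      + (x-4*u)*(x-5*u)*(x-6*u)*(1+x-2*u)^4/5040
    ≤ ((1+x-2*u)^4+1)/24 + (x-4*u)*(x-5*u)*(1+x-2*u)^4/720 := by
  have hu' : (0:ℝ) ≤ u := hu.le
  have hp : (0:ℝ) ≤ x - 7*u := by linarith
  have hq : (0:ℝ) ≤ 113/50 - x := by linarith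
  have hid : (((1+x-2*u)^4+1)/24 + (x-4*u)*(x-5*u)*(1+x-2*u)^4/720) - (x*(x-2*u)*(1+x-2*u)/6 + (x-4*u)*(1+x-2*u)^4/120 + (x-4*u)*(x-5*u)*(x-6*u)*(1+x-2*u)^4/5040) = (195312500000/705781644134451 : ℝ)*(u^0*(x-7*u)^0*(113/50-x)^7) + (2205859375000/705781644134451 : ℝ)*(u^0*(x-7*u)^1*(113/50-x)^6) + (29246300781250/2117344932403353 : ℝ)*(u^0*(x-7*u)^2*(113/50-x)^5) + (446966087890625/14821414526823471 : ℝ)*(u^0*(x-7*u)^3*(113/50-x)^4) + (181303489000000/4940471508941157 : ℝ)*(u^0*(x-7*u)^4*(113/50-x)^3) + (376947817848125/14821414526823471 : ℝ)*(u^0*(x-7*u)^5*(113/50-x)^2) + (1116312497609135/118571316214587768 : ℝ)*(u^0*(x-7*u)^6*(113/50-x)^1) + (169755446271837/131745906905097520 : ℝ)*(u^0*(x-7*u)^7*(113/50-x)^0) + (13851953125000/705781644134451 : ℝ)*(u^1*(x-7*u)^0*(113/50-x)^6) + (363636863281250/2117344932403353 : ℝ)*(u^1*(x-7*u)^1*(113/50-x)^5)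 + (8288292597343750/14821414526823471 : ℝ)*(u^1*(x-7*u)^2*(113/50-x)^4) + (1472791574528125/1646823836313719 : ℝ)*(u^1*(x-7*u)^3*(113/50-x)^3) + (22531598854763375/29642829053646942 : ℝ)*(u^1*(x-7*u)^4*(113/50-x)^2) + (39157204308209095/118571316214587768 : ℝ)*(u^1*(x-7*u)^5*(113/50-x)^1) + (3560514002382231/65872953452548760 : ℝ)*(u^1*(x-7*u)^6*(113/50-x)^0) + (126635882812500/235260548044817 : ℝ)*(u^2*(x-7*u)^0*(113/50-x)^5) + (5732193128984375/1646823836313719 : ℝ)*(u^2*(x-7*u)^1*(113/50-x)^4) + (40614806973884375/4940471508941157 : ℝ)*(u^2*(x-7*u)^2*(113/50-x)^3) + (6421445341502375/705781644134451 : ℝ)*(u^2*(x-7*u)^3*(113/50-x)^2) + (7889040591472430/1646823836313719 : ℝ)*(u^2*(x-7*u)^4*(113/50-x)^1) + (52655371895324413/56462531530756080 : ℝ)*(u^2*(x-7*u)^5*(113/50-x)^0) + (35965154434843750/4940471508941157 : ℝ)*(u^3*(x-7*u)^0*(113/50-x)^4) + (55735285216021875/1646823836313719 : ℝ)*(u^3*(x-7*u)^1*(113/50-x)^3)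 + (270078040822310750/4940471508941157 : ℝ)*(u^3*(x-7*u)^2*(113/50-x)^2) + (728603287779804545/19761886035764628 : ℝ)*(u^3*(x-7*u)^3*(113/50-x)^1) + (568430903977724581/65872953452548760 : ℝ)*(u^3*(x-7*u)^4*(113/50-x)^0) + (260540910388765625/4940471508941157 : ℝ)*(u^4*(x-7*u)^0*(113/50-x)^3) + (272317177114965000/1646823836313719 : ℝ)*(u^4*(x-7*u)^1*(113/50-x)^2) + (6294471339695561725/39523772071529256 : ℝ)*(u^4*(x-7*u)^2*(113/50-x)^1) + (1220836863897739843/26349181381019504 : ℝ)*(u^4*(x-7*u)^3*(113/50-x)^0) + (1996656619730459375/9880943017882314 : ℝ)*(u^5*(x-7*u)^0*(113/50-x)^2) + (691700539806326125/1882084384358536 : ℝ)*(u^5*(x-7*u)^1*(113/50-x)^1) + (5699821301426001115/39523772071529256 : ℝ)*(u^5*(x-7*u)^2*(113/50-x)^0) + (7031570067331724375/19761886035764628 : ℝ)*(u^6*(x-7*u)^0*(113/50-x)^1) + (6326840641146764575/26349181381019504 : ℝ)*(u^6*(x-7*u)^1*(113/50-x)^0) + (6485556380575126625/39523772071529256 :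 ℝ)*(u^7*(x-7*u)^0*(113/50-x)^0) := by ring
  have f0 : (0:ℝ) ≤ (195312500000/705781644134451 : ℝ)*(u^0*(x-7*u)^0*(113/50-x)^7) := by positivity
  have f1 : (0:ℝ) ≤ (2205859375000/705781644134451 : ℝ)*(u^0*(x-7*u)^1*(113/50-x)^6) := by positivity
  have f2 : (0:ℝ) ≤ (29246300781250/2117344932403353 : ℝ)*(u^0*(x-7*u)^2*(113/50-x)^5) := by positivity
  have f3 : (0:ℝ) ≤ (446966087890625/14821414526823471 : ℝ)*(u^0*(x-7*u)^3*(113/50-x)^4) := by positivity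
  have f4 : (0:ℝ) ≤ (181303489000000/4940471508941157 : ℝ)*(u^0*(x-7*u)^4*(113/50-x)^3) := by positivity
  have f5 : (0:ℝ) ≤ (376947817848125/14821414526823471 : ℝ)*(u^0*(x-7*u)^5*(113/50-x)^2) := by positivity
  have f6 : (0:ℝ) ≤ (1116312497609135/118571316214587768 : ℝ)*(u^0*(x-7*u)^6*(113/50-x)^1) := by positivity
  have f7 : (0:ℝ) ≤ (169755446271837/131745906905097520 : ℝ)*(u^0*(x-7*u)^7*(113/50-x)^0) := by positivity
  have f8 : (0:ℝ) ≤ (13851953125000/705781644134451 : ℝ)*(u^1*(x-7*u)^0*(113/50-x)^6) := by positivity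
  have f9 : (0:ℝ) ≤ (363636863281250/2117344932403353 : ℝ)*(u^1*(x-7*u)^1*(113/50-x)^5) := by positivity
  have f10 : (0:ℝ) ≤ (8288292597343750/14821414526823471 : ℝ)*(u^1*(x-7*u)^2*(113/50-x)^4) := by positivity
  have f11 : (0:ℝ) ≤ (1472791574528125/1646823836313719 : ℝ)*(u^1*(x-7*u)^3*(113/50-x)^3) := by positivity
  have f12 : (0:ℝ) ≤ (22531598854763375/29642829053646942 : ℝ)*(u^1*(x-7*u)^4*(113/50-x)^2) := by positivity
  have f13 : (0:ℝ) ≤ (39157204308209095/118571316214587768 : ℝ)*(u^1*(x-7*u)^5*(113/50-x)^1) := by positivity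
  have f14 : (0:ℝ) ≤ (3560514002382231/65872953452548760 : ℝ)*(u^1*(x-7*u)^6*(113/50-x)^0) := by positivity
  have f15 : (0:ℝ) ≤ (126635882812500/235260548044817 : ℝ)*(u^2*(x-7*u)^0*(113/50-x)^5) := by positivity
  have f16 : (0:ℝ) ≤ (5732193128984375/1646823836313719 : ℝ)*(u^2*(x-7*u)^1*(113/50-x)^4) := by positivity
  have f17 : (0:ℝ) ≤ (40614806973884375/4940471508941157 : ℝ)*(u^2*(x-7*u)^2*(113/50-x)^3) := by positivity
  have f18 : (0:ℝ) ≤ (6421445341502375/705781644134451 : ℝ)*(u^2*(x-7*u)^3*(113/50-x)^2) := by positivity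
  have f19 : (0:ℝ) ≤ (7889040591472430/1646823836313719 : ℝ)*(u^2*(x-7*u)^4*(113/50-x)^1) := by positivity
  have f20 : (0:ℝ) ≤ (52655371895324413/56462531530756080 : ℝ)*(u^2*(x-7*u)^5*(113/50-x)^0) := by positivity
  have f21 : (0:ℝ) ≤ (35965154434843750/4940471508941157 : ℝ)*(u^3*(x-7*u)^0*(113/50-x)^4) := by positivity
  have f22 : (0:ℝ) ≤ (55735285216021875/1646823836313719 : ℝ)*(u^3*(x-7*u)^1*(113/50-x)^3) := by positivity
  have f23 : (0:ℝ) ≤ (270078040822310750/4940471508941157 : ℝ)*(u^3*(x-7*u)^2*(113/50-x)^2) := by positivity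
  have f24 : (0:ℝ) ≤ (728603287779804545/19761886035764628 : ℝ)*(u^3*(x-7*u)^3*(113/50-x)^1) := by positivity
  have f25 : (0:ℝ) ≤ (568430903977724581/65872953452548760 : ℝ)*(u^3*(x-7*u)^4*(113/50-x)^0) := by positivity
  have f26 : (0:ℝ) ≤ (260540910388765625/4940471508941157 : ℝ)*(u^4*(x-7*u)^0*(113/50-x)^3) := by positivity
  have f27 : (0:ℝ) ≤ (272317177114965000/1646823836313719 : ℝ)*(u^4*(x-7*u)^1*(113/50-x)^2) := by positivity
  have f28 : (0:ℝ) ≤ (6294471339695561725/39523772071529256 : ℝ)*(u^4*(x-7*u)^2*(113/50-x)^1) := by positivity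
  have f29 : (0:ℝ) ≤ (1220836863897739843/26349181381019504 : ℝ)*(u^4*(x-7*u)^3*(113/50-x)^0) := by positivity
  have f30 : (0:ℝ) ≤ (1996656619730459375/9880943017882314 : ℝ)*(u^5*(x-7*u)^0*(113/50-x)^2) := by positivity
  have f31 : (0:ℝ) ≤ (691700539806326125/1882084384358536 : ℝ)*(u^5*(x-7*u)^1*(113/50-x)^1) := by positivity
  have f32 : (0:ℝ) ≤ (5699821301426001115/39523772071529256 : ℝ)*(u^5*(x-7*u)^2*(113/50-x)^0) := by positivity
  have f33 : (0:ℝ) ≤ (7031570067331724375/19761886035764628 : ℝ)*(u^6*(x-7*u)^0*(113/50-x)^1) := by positivity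
  have f34 : (0:ℝ) ≤ (6326840641146764575/26349181381019504 : ℝ)*(u^6*(x-7*u)^1*(113/50-x)^0) := by positivity
  have f35 : (0:ℝ) ≤ (6485556380575126625/39523772071529256 : ℝ)*(u^7*(x-7*u)^0*(113/50-x)^0) := by positivity
  linarith [hid, f0, f1, f2, f3, f4, f5, f6, f7, f8, f9, f10, f11, f12, f13, f14, f15, f16, f17, f18, f19, f20, f21, f22, f23, f24, f25, f26, f27, f28, f29, f30, f31, f32, f33, f34, f35]


set_option maxHeartbeats 1000000 in
theorem poa_smallM (m : ℕ) (hm2 : 2 ≤ m) (hm6 : m ≤ 6) (u v : ℝ) (hv : 0 < v) (hvu : v ≤ u)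
    (hs : (m:ℝ)*u ≤ 113/50) (huv : u - v = ((m:ℝ)-2)*u*v) :
    0 ≤ (m:ℝ)*u*v - (m:ℝ)*((m:ℝ)-1)*((m:ℝ)-2)/6*(((m:ℝ)-2)^3*u^3*v^3)
      + (m:ℝ)*((m:ℝ)-1)*((m:ℝ)-2)*((m:ℝ)-3)/24*(u^4+v^4)
      - (m:ℝ)*((m:ℝ)-1)*((m:ℝ)-2)*((m:ℝ)-3)*((m:ℝ)-4)/120*u^5
      + (m:ℝ)*((m:ℝ)-1)*((m:ℝ)-2)*((m:ℝ)-3)*((m:ℝ)-4)*((m:ℝ)-5)/720*u^6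
      - (m:ℝ)*((m:ℝ)-1)*((m:ℝ)-2)*((m:ℝ)-3)*((m:ℝ)-4)*((m:ℝ)-5)*((m:ℝ)-6)/5040*u^7 := by
  have hu : 0 < u := lt_of_lt_of_le hv hvu
  have hvD : v * (1+((m:ℝ)-2)*u) = u := by linear_combination -huv
  have huv4 : (u*v)^2 * (1+((m:ℝ)-2)*u)^2 = u^4 := by
    linear_combination (u*v*(1+((m:ℝ)-2)*u) + u^2)*u*hvD
  interval_cases m <;> push_cast at hs hvD huv4 ⊢
  · nlinarith [mul_pos hu hv]
  · -- m = 3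
    nlinarith [mul_pos hu hv, sq_nonneg (u*v), mul_pos (mul_pos hu hv) (mul_pos hu hv),
      pow_nonneg hu.le 4, pow_nonneg hv.le 4]
  · -- m = 4 : need 8 (uv)^2 ≤ 1
    have hD2 : (0:ℝ) < (1+2*u)^2 := by positivity
    have hc : 8*u^4 ≤ (1+2*u)^2 := by
      have h2 : u^2 ≤ (113/200)^2 := by nlinarith
      nlinarith [h2, sq_nonneg u, hu.le]
    have h1 : 8*(u*v)^2 ≤ 1 := by
      rw [← mul_le_iff_le_one_left hD2] at *
      nlinarith [huv4]
    nlinarith [h1, mul_pos hu hv, pow_nonneg hu.le 4, pow_nonneg hv.le 4,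
      mul_nonneg (mul_nonneg (mul_pos hu hv).le (mul_pos hu hv).le) (mul_pos hu hv).le]
  · -- m = 5 : need 54 (uv)^2 ≤ 1
    have hD2 : (0:ℝ) < (1+3*u)^2 := by positivity
    have hc : 54*u^4 ≤ (1+3*u)^2 := by
      have h2 : u^2 ≤ (113/250)^2 := by nlinarith
      nlinarith [h2, sq_nonneg u, hu.le]
    have h1 : 54*(u*v)^2 ≤ 1 := by
      nlinarith [huv4, hD2]
    nlinarith [h1, mul_pos hu hv, pow_nonneg hu.le 4, pow_nonneg hv.le 4]
  · -- m = 6 : need (640/3)(uv)^2 ≤ 1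
    have hD2 : (0:ℝ) < (1+4*u)^2 := by positivity
    have hc : (640/3)*u^4 ≤ (1+4*u)^2 := by
      have h2 : u^2 ≤ (113/300)^2 := by nlinarith
      nlinarith [h2, sq_nonneg u, hu.le]
    have h1 : (640/3)*(u*v)^2 ≤ 1 := by
      nlinarith [huv4, hD2]
    nlinarith [h1, mul_pos hu hv, pow_nonneg hu.le 4, pow_nonneg hv.le 4, pow_nonneg hu.le 6]

set_option maxHeartbeats 1000000 in
theorem poa_bigM (M u v : ℝ) (hM : 7 ≤ M) (hv : 0 < v) (hvu : v ≤ u) (hs : M*u ≤ 113/50)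
    (huv : u - v = (M-2)*u*v) :
    0 ≤ M*u*v - M*(M-1)*(M-2)/6*((M-2)^3*u^3*v^3)
      + M*(M-1)*(M-2)*(M-3)/24*(u^4+v^4)
      - M*(M-1)*(M-2)*(M-3)*(M-4)/120*u^5
      + M*(M-1)*(M-2)*(M-3)*(M-4)*(M-5)/720*u^6
      - M*(M-1)*(M-2)*(M-3)*(M-4)*(M-5)*(M-6)/5040*u^7 := by
  have hu : 0 < u := lt_of_lt_of_le hv hvu
  have hD : 0 < 1+(M-2)*u := by nlinarith
  have hvD : v * (1+(M-2)*u) = u := by linear_combination -huv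
  have hv3 : v^3 * (1+(M-2)*u)^3 = u^3 := by
    linear_combination (v^2*(1+(M-2)*u)^2 + v*(1+(M-2)*u)*u + u^2) * hvD
  have hv4 : v^4 * (1+(M-2)*u)^4 = u^4 := by
    linear_combination (v^3*(1+(M-2)*u)^3 + v^2*(1+(M-2)*u)^2*u + v*(1+(M-2)*u)*u^2 + u^3) * hvD
  have hcore := poa_core (M*u) u hu (by nlinarith) hs
  have hcorepos : 0 ≤ (((1+M*u-2*u)^4+1)/24 + (M*u-4*u)*(M*u-5*u)*(1+M*u-2*u)^4/720)
       - ((M*u)*(M*u-2*u)*(1+M*u-2*u)/6 + (M*u-4*u)*(1+M*u-2*u)^4/120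
          + (M*u-4*u)*(M*u-5*u)*(M*u-6*u)*(1+M*u-2*u)^4/5040) := by linarith
  have hL : (0:ℝ) ≤ M*(M-1)*(M-2)*(M-3)*u^4 := by
    have h0 : (0:ℝ) ≤ M := by linarith
    have h1 : (0:ℝ) ≤ M-1 := by linarith
    have h2 : (0:ℝ) ≤ M-2 := by linarith
    have h3 : (0:ℝ) ≤ M-3 := by linarith
    have h4 : (0:ℝ) ≤ u^4 := by positivity
    exact mul_nonneg (mul_nonneg (mul_nonneg (mul_nonneg h0 h1) h2) h3) h4
  have hcore4 := mul_nonneg hL hcorepos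
  have hterm1 : (0:ℝ) ≤ M*u^2*(1+(M-2)*u)^3 := by positivity
  have hterm3 : (0:ℝ) ≤ M*(M-1)*(M-2)^2*(M-4)/6*u^6*(1+(M-2)*u) := by
    have h0 : (0:ℝ) ≤ M := by linarith
    have h1 : (0:ℝ) ≤ M-1 := by linarith
    have h2 : (0:ℝ) ≤ (M-2)^2 := sq_nonneg _
    have h4 : (0:ℝ) ≤ M-4 := by linarith
    have h6 : (0:ℝ) ≤ u^6 := by positivity
    have := mul_nonneg (mul_nonneg (mul_nonneg (mul_nonneg (mul_nonneg (mul_nonneg h0 h1) h2) h4) h6) hD.le) (by norm_num : (0:ℝ) ≤ 1/6)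
    nlinarith [this]
  have h4pos : 0 < (1+(M-2)*u)^4 := by positivity
  rw [← mul_nonneg_iff_of_pos_right h4pos]
  have hident : (M*u*v - M*(M-1)*(M-2)/6*((M-2)^3*u^3*v^3)
      + M*(M-1)*(M-2)*(M-3)/24*(u^4+v^4)
      - M*(M-1)*(M-2)*(M-3)*(M-4)/120*u^5
      + M*(M-1)*(M-2)*(M-3)*(M-4)*(M-5)/720*u^6
      - M*(M-1)*(M-2)*(M-3)*(M-4)*(M-5)*(M-6)/5040*u^7) * (1+(M-2)*u)^4
    = M*u^2*(1+(M-2)*u)^3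
      + (M*(M-1)*(M-2)*(M-3)*u^4) * ((((1+M*u-2*u)^4+1)/24 + (M*u-4*u)*(M*u-5*u)*(1+M*u-2*u)^4/720)
       - ((M*u)*(M*u-2*u)*(1+M*u-2*u)/6 + (M*u-4*u)*(1+M*u-2*u)^4/120
          + (M*u-4*u)*(M*u-5*u)*(M*u-6*u)*(1+M*u-2*u)^4/5040))
      + M*(M-1)*(M-2)^2*(M-4)/6*u^6*(1+(M-2)*u) := by
    linear_combination (M*u*(1+(M-2)*u)^3)*hvD - (M*(M-1)*(M-2)^4/6*u^3*(1+(M-2)*u))*hv3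
      + (M*(M-1)*(M-2)*(M-3)/24)*hv4
  rw [hident]
  exact add_nonneg (add_nonneg hterm1 hcore4) hterm3

set_option maxHeartbeats 1000000 in
theorem poa_keyineq (m : ℕ) (hm : 2 ≤ m) (u v : ℝ) (hv : 0 < v) (hvu : v ≤ u)
    (hs : (m:ℝ)*u ≤ 113/50) (huv : u - v = ((m:ℝ)-2)*u*v) :
    2 ≤ (1 - (m:ℝ)*u + (m:ℝ)*((m:ℝ)-1)/2*u^2 - (m:ℝ)*((m:ℝ)-1)*((m:ℝ)-2)/6*u^3
      + (m:ℝ)*((m:ℝ)-1)*((m:ℝ)-2)*((m:ℝ)-3)/24*u^4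
      - (m:ℝ)*((m:ℝ)-1)*((m:ℝ)-2)*((m:ℝ)-3)*((m:ℝ)-4)/120*u^5
      + (m:ℝ)*((m:ℝ)-1)*((m:ℝ)-2)*((m:ℝ)-3)*((m:ℝ)-4)*((m:ℝ)-5)/720*u^6
      - (m:ℝ)*((m:ℝ)-1)*((m:ℝ)-2)*((m:ℝ)-3)*((m:ℝ)-4)*((m:ℝ)-5)*((m:ℝ)-6)/5040*u^7)
      + (1 + (m:ℝ)*v + (m:ℝ)*((m:ℝ)-1)/2*v^2 + (m:ℝ)*((m:ℝ)-1)*((m:ℝ)-2)/6*v^3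
      + (m:ℝ)*((m:ℝ)-1)*((m:ℝ)-2)*((m:ℝ)-3)/24*v^4) := by
  set M := (m:ℝ) with hM
  have h2 : (u-v)^2 = ((M-2)*u*v)^2 := by rw [huv]
  have h3 : (u-v)^3 = ((M-2)*u*v)^3 := by rw [huv]
  have hP : 0 ≤ M*u*v - M*(M-1)*(M-2)/6*((M-2)^3*u^3*v^3)
      + M*(M-1)*(M-2)*(M-3)/24*(u^4+v^4)
      - M*(M-1)*(M-2)*(M-3)*(M-4)/120*u^5
      + M*(M-1)*(M-2)*(M-3)*(M-4)*(M-5)/720*u^6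
      - M*(M-1)*(M-2)*(M-3)*(M-4)*(M-5)*(M-6)/5040*u^7 := by
    rcases Nat.lt_or_ge m 7 with h | h
    · exact poa_smallM m hm (by omega) u v hv hvu hs huv
    · exact poa_bigM M u v (by rw [hM]; exact_mod_cast h) hv hvu hs huv
  have hE : ((1 - M*u + M*(M-1)/2*u^2 - M*(M-1)*(M-2)/6*u^3
      + M*(M-1)*(M-2)*(M-3)/24*u^4
      - M*(M-1)*(M-2)*(M-3)*(M-4)/120*u^5
      + M*(M-1)*(M-2)*(M-3)*(M-4)*(M-5)/720*u^6
      - M*(M-1)*(M-2)*(M-3)*(M-4)*(M-5)*(M-6)/5040*u^7)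
      + (1 + M*v + M*(M-1)/2*v^2 + M*(M-1)*(M-2)/6*v^3
      + M*(M-1)*(M-2)*(M-3)/24*v^4)) - 2
    = M*u*v - M*(M-1)*(M-2)/6*((M-2)^3*u^3*v^3)
      + M*(M-1)*(M-2)*(M-3)/24*(u^4+v^4)
      - M*(M-1)*(M-2)*(M-3)*(M-4)/120*u^5
      + M*(M-1)*(M-2)*(M-3)*(M-4)*(M-5)/720*u^6
      - M*(M-1)*(M-2)*(M-3)*(M-4)*(M-5)*(M-6)/5040*u^7 := by
    linear_combination (-M - M*(M-1)*(M-2)/2*u*v)*huv + (M*(M-1)/2)*h2 - (M*(M-1)*(M-2)/6)*h3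
  linarith [hP, hE]

/-- The key analytic inequality behind `PoA ≤ 2` for monomial prices: for a
positive integer `d` and `r ∈ (0, 1/(d+1))`,
`((1 − (d+1)r)/(1 − dr))^{d+1} + 1/(1 − r)^{d+1} ≥ 2`. -/
theorem stmt11 (d : ℕ) (hd : 0 < d)
    (r : ℝ) (hr : r ∈ Set.Ioo (0 : ℝ) (1 / ((d : ℝ) + 1))) :
    ((1 - ((d : ℝ) + 1) * r) / (1 - (d : ℝ) * r)) ^ (d + 1) +
      1 / (1 - r) ^ (d + 1) ≥ 2 := by
  obtain ⟨hr0, hr1⟩ := hr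
  have hd1 : (1:ℝ) ≤ (d:ℝ) := by exact_mod_cast hd
  have hD1 : (0:ℝ) < (d:ℝ) + 1 := by linarith
  have hw : 0 < 1 - ((d:ℝ)+1)*r := by
    have h := (lt_div_iff₀ hD1).mp hr1
    nlinarith
  have hz : 0 < 1 - (d:ℝ)*r := by nlinarith
  have hy : 0 < 1 - r := by nlinarith
  have hyp : 0 < (1-r)^(d+1) := pow_pos hy _
  by_cases hc : (1-r)^(d+1) ≤ 1/2
  · have h2 : 2 ≤ 1/(1-r)^(d+1) := by
      rw [le_div_iff₀ hyp]; linarith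
    have h1 : 0 ≤ ((1 - ((d:ℝ)+1)*r)/(1 - (d:ℝ)*r))^(d+1) :=
      pow_nonneg (div_nonneg hw.le hz.le) _
    linarith
  · push_neg at hc
    -- derive (d+1)*r < log 2
    have hexp : (1-r)^(d+1) ≤ Real.exp (-(((d:ℝ)+1)*r)) := by
      have h1 : 1 - r ≤ Real.exp (-r) := by
        have := Real.add_one_le_exp (-r); linarith
      calc (1-r)^(d+1) ≤ (Real.exp (-r))^(d+1) := by
            apply pow_le_pow_left₀ hy.le h1
        _ = Real.exp (-(((d:ℝ)+1)*r)) := by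
            rw [← Real.exp_nat_mul]; push_cast; ring_nf
    have hq : ((d:ℝ)+1)*r < Real.log 2 := by
      have h12 : (1:ℝ)/2 < Real.exp (-(((d:ℝ)+1)*r)) := lt_of_lt_of_le hc hexp
      have := Real.log_lt_log (by norm_num : (0:ℝ) < 1/2) h12
      rw [Real.log_exp] at this
      have hl12 : Real.log (1/2) = - Real.log 2 := by
        rw [one_div, Real.log_inv]
      linarith [hl12 ▸ this]
    have hqn : ((d:ℝ)+1)*r < 0.6931471808 := lt_trans hq Real.log_two_lt_d9
    rw [show (0.6931471808:ℝ) = 6931471808/10^10 by norm_num] at hqn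
    -- set u, v
    set u := r/(1 - (d:ℝ)*r) with hu_def
    set v := r/(1 - r) with hv_def
    have hv : 0 < v := div_pos hr0 hy
    have hu : 0 < u := div_pos hr0 hz
    have hvu : v ≤ u := by
      apply div_le_div_of_nonneg_left hr0.le hz
      nlinarith
    have hm2 : 2 ≤ d + 1 := by omega
    have hMcast : ((d+1:ℕ):ℝ) = (d:ℝ)+1 := by push_cast; ring
    have hs : ((d+1:ℕ):ℝ)*u ≤ 113/50 := by
      rw [hMcast, hu_def, ← mul_div_assoc, div_le_iff₀ hz]
      nlinarith
    have huv : u - v = (((d+1:ℕ):ℝ)-2)*u*v := by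
      rw [hMcast, hu_def, hv_def]
      rw [div_sub_div _ _ hz.ne' hy.ne', mul_assoc, div_mul_div_comm, ← mul_div_assoc]
      ring
    have hu1 : u ≤ 1 := by
      rw [hu_def, div_le_one hz]; nlinarith
    have hA : (1 - ((d:ℝ)+1)*r)/(1 - (d:ℝ)*r) = 1 - u := by
      rw [hu_def]; field_simp; ring
    have hB : 1/(1-r)^(d+1) = (1+v)^(d+1) := by
      rw [hv_def]
      have h1 : 1 + r/(1-r) = 1/(1-r) := by field_simp; ring
      rw [h1, div_pow, one_pow]
    rw [hA, hB, ge_iff_le]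
    calc (2:ℝ) ≤ _ := poa_keyineq (d+1) hm2 u v hv hvu hs huv
      _ ≤ (1-u)^(d+1) + (1+v)^(d+1) := by
          have h1 := poa_bon7 (d+1) u hu.le hu1
          have h2 := poa_bin4 (d+1) v hv.le
          linarith
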